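/- For formal Laurent series: if F(z) is a formal Laurent series and g(z) is a formal power series with g(0) = 0 and g'(0) ≠ 0, then res F(z) = res F(g(z)) * g'(z), where res denotes the coefficient of z^{-1}. -/

import Mathlib

open PowerSeries HahnSeries

private lemma mul_coeff_Icc {K : Type*} [Field K] (f G : LaurentSeries K) (N : ℤ)
    (hf : ∀ a < N, f.coeff a = 0) (hG : ∀ b < (0:ℤ), G.coeff b = 0) (n : ℤ) :
    (f * G).coeff n = ∑ a ∈ Finset.Icc N n, f.coeff a * G.coeff (n - a) := by
  classical
  rw [HahnSeries.coeff_mul]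
  rw [← Finset.sum_filter_of_ne (p := fun a => f.coeff a ≠ 0 ∧ G.coeff (n - a) ≠ 0)
    (by intro x _ hx; constructor <;> [exact fun h => hx (by rw [h, zero_mul]);
      exact fun h => hx (by rw [h, mul_zero])])]
  refine Finset.sum_nbij' (fun ij => ij.1) (fun a => (a, n - a)) ?_ ?_ ?_ ?_ ?_
  · rintro ⟨a, b⟩ hab
    rw [Finset.mem_addAntidiagonal] at hab
    obtain ⟨h1, h2, h3⟩ := hab
    simp only [HahnSeries.mem_support] at h1 h2
    simp only [Finset.mem_filter, Finset.mem_Icc]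
    have hb0 : 0 ≤ b := le_of_not_gt fun hb => h2 (hG b hb)
    have haN : N ≤ a := le_of_not_gt fun ha => h1 (hf a ha)
    have hb : b = n - a := by omega
    exact ⟨⟨haN, by omega⟩, h1, hb ▸ h2⟩
  · intro a ha
    simp only [Finset.mem_filter, Finset.mem_Icc] at ha
    rw [Finset.mem_addAntidiagonal]
    exact ⟨ha.2.1, ha.2.2, by ring⟩
  · rintro ⟨a, b⟩ hab
    rw [Finset.mem_addAntidiagonal] at hab
    obtain ⟨-, -, h3⟩ := hab
    simp only [Prod.mk.injEq]
    exact ⟨trivial, by omega⟩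
  · intro a _; rfl
  · rintro ⟨a, b⟩ hab
    obtain ⟨-, -, h3⟩ := Finset.mem_addAntidiagonal.mp hab
    simp [(by omega : n - a = b)]

private lemma coe_coeff_neg {K : Type*} [Field K] (P : PowerSeries K) {b : ℤ} (hb : b < 0) :
    (P : LaurentSeries K).coeff b = 0 := by
  rw [PowerSeries.coeff_coe, if_pos hb]

private lemma coe_pow' {K : Type*} [Field K] (P : PowerSeries K) (m : ℕ) :
    ((P ^ m : PowerSeries K) : LaurentSeries K) = (P : LaurentSeries K) ^ m :=
  map_pow (HahnSeries.ofPowerSeries ℤ K) P m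

private lemma zpow_neg_rep {K : Type*} [Field K] (h : PowerSeries K)
    (hh0 : PowerSeries.constantCoeff h ≠ 0) (m : ℕ) :
    ((single (1:ℤ) 1 : LaurentSeries K) * (h : LaurentSeries K)) ^ (-(m:ℤ)) =
      single (-(m:ℤ)) 1 * ((h⁻¹ ^ m : PowerSeries K) : LaurentSeries K) := by
  have hv : h * h⁻¹ = 1 := PowerSeries.mul_inv_cancel h hh0
  have hpow : ((single (1:ℤ) 1 : LaurentSeries K) * (h : LaurentSeries K)) ^ m
      = single (m:ℤ) 1 * ((h ^ m : PowerSeries K) : LaurentSeries K) := by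
    rw [mul_pow, HahnSeries.single_pow, one_pow, coe_pow']
    norm_num
  rw [zpow_neg, zpow_natCast, hpow]
  refine inv_eq_of_mul_eq_one_right ?_
  rw [mul_mul_mul_comm, HahnSeries.single_mul_single, one_mul, add_neg_cancel,
    ← PowerSeries.coe_mul, ← mul_pow, hv, one_pow, PowerSeries.coe_one, mul_one]
  rfl

private lemma res_aux {K : Type*} [Field K] [CharZero K] (h : PowerSeries K)
    (hh0 : PowerSeries.constantCoeff h ≠ 0) (t : ℕ) :
    PowerSeries.coeff t (h⁻¹ ^ (t+1) * PowerSeries.derivative K (X * h)) =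
      if t = 0 then 1 else 0 := by
  set v := h⁻¹ with hvdef
  have hv : h * v = 1 := PowerSeries.mul_inv_cancel h hh0
  have hd : PowerSeries.derivative K (X * h) = X * PowerSeries.derivative K h + h := by
    rw [Derivation.leibniz, smul_eq_mul, smul_eq_mul, PowerSeries.derivative_X, mul_one, add_comm]
  have hvh : ∀ s : ℕ, v ^ (s+1) * h = v ^ s := by
    intro s
    rw [pow_succ, mul_assoc, mul_comm v h, hv, mul_one]
  rw [hd, mul_add, hvh, mul_comm (v ^ (t+1)), mul_assoc]
  cases t with
  | zero =>
    simp only [pow_zero, if_pos rfl]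
    rw [map_add]
    have h1 : PowerSeries.coeff 0 (X * (PowerSeries.derivative K h * v ^ (0+1))) = 0 := by
      rw [PowerSeries.coeff_zero_eq_constantCoeff, map_mul, PowerSeries.constantCoeff_X, zero_mul]
    rw [h1, zero_add, PowerSeries.coeff_zero_eq_constantCoeff, map_one]
    norm_num
  | succ s =>
    rw [if_neg (Nat.succ_ne_zero s), map_add, PowerSeries.coeff_succ_X_mul]
    have h0 : h * PowerSeries.derivative K v + v * PowerSeries.derivative K h = 0 := by
      have h2 := congrArg (PowerSeries.derivative K) hv
      rwa [Derivation.leibniz, smul_eq_mul, smul_eq_mul, Derivation.map_one_eq_zero] at h2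
    have hDv : PowerSeries.derivative K v = -(v * v * PowerSeries.derivative K h) := by
      calc PowerSeries.derivative K v = (v * h) * PowerSeries.derivative K v := by
            rw [mul_comm v h, hv, one_mul]
        _ = v * (h * PowerSeries.derivative K v) := by ring
        _ = v * (-(v * PowerSeries.derivative K h)) := by
            rw [eq_neg_of_add_eq_zero_left h0]
        _ = -(v * v * PowerSeries.derivative K h) := by ring
    have hDpow : PowerSeries.derivative K (v ^ (s+1)) =
        -(((s:K)+1) • (PowerSeries.derivative K h * v ^ (s+2))) := by
      rw [Derivation.leibniz_pow, hDv, Nat.add_sub_cancel, ← Nat.cast_smul_eq_nsmul K]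
      rw [smul_eq_mul (a := v ^ s), show v ^ s * -(v * v * PowerSeries.derivative K h)
        = -(PowerSeries.derivative K h * v ^ (s+2)) by ring, smul_neg]
      push_cast
      rfl
    have hc := PowerSeries.coeff_derivative (v ^ (s+1)) s
    rw [hDpow, map_neg, map_smul, smul_eq_mul] at hc
    have hcast : ((s:K)+1) ≠ 0 := by
      have h3 := Nat.cast_ne_zero (R := K) (n := s+1) |>.mpr (Nat.succ_ne_zero s)
      push_cast at h3; exact h3
    have h4 : ((s:K)+1) * (PowerSeries.coeff s
        (PowerSeries.derivative K h * v ^ (s+2)) +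
        PowerSeries.coeff (s+1) (v ^ (s+1))) = 0 := by
      linear_combination -1 * hc
    exact (mul_eq_zero.mp h4).resolve_left hcast

/-- Change of variables for residues of formal Laurent series: if `g` is a power series with
`g(0) = 0` and `g'(0) ≠ 0`, then `res F(z) = res F(g(z)) g'(z)`.  Here `Fg` is the composition
`F(g(z))`, characterized coefficientwise: the coefficient of `z^k` in `F(g)` is
`∑_{i} (coeff of z^i in F) * (coeff of z^k in g^i)`, a finite sum since `F` has only finitely
many negative terms and `g^i` has order `i`. -/
theorem laurentSeries_residue_change_of_variables {K : Type*} [Field K] [CharZero K]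
    (F : LaurentSeries K) (g : PowerSeries K)
    (hg0 : PowerSeries.constantCoeff g = 0) (hg1 : PowerSeries.coeff 1 g ≠ 0)
    (Fg : LaurentSeries K)
    (hFg : ∀ k : ℤ, Fg.coeff k =
      ∑ i ∈ Finset.Icc F.order k, F.coeff i * (((g : LaurentSeries K)) ^ i).coeff k) :
    F.coeff (-1) =
      (Fg * ((PowerSeries.derivative K g : PowerSeries K) : LaurentSeries K)).coeff (-1) := by
  classical
  obtain ⟨h, hgh⟩ : ∃ h, g = X * h := PowerSeries.X_dvd_iff.mpr hg0
  have hh0 : PowerSeries.constantCoeff h ≠ 0 := by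
    have h1 : PowerSeries.coeff 1 g = PowerSeries.constantCoeff h := by
      rw [hgh, show (1:ℕ) = 0 + 1 from rfl, PowerSeries.coeff_succ_X_mul,
        PowerSeries.coeff_zero_eq_constantCoeff]
    rwa [h1] at hg1
  have hgcoe : (g : LaurentSeries K) = single (1:ℤ) 1 * (h : LaurentSeries K) := by
    rw [hgh, PowerSeries.coe_mul, PowerSeries.coe_X]
  have key : ∀ i : ℤ, i ≤ -1 → (g : LaurentSeries K) ^ i
      = single i 1 * ((h⁻¹ ^ (-i).toNat : PowerSeries K) : LaurentSeries K) := by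
    intro i hi
    have hm : i = -(((-i).toNat : ℕ) : ℤ) := by omega
    rw [hgcoe, hm, zpow_neg_rep h hh0,
      show (- -(((-i).toNat:ℕ):ℤ)).toNat = (-i).toNat by omega]
  have hord : ∀ i : ℤ, i ≤ -1 → ∀ a : ℤ, a < i →
      ((g : LaurentSeries K) ^ i).coeff a = 0 := by
    intro i hi a ha
    rw [key i hi, show a = (a - i) + i by ring, HahnSeries.coeff_single_mul_add, one_mul,
      coe_coeff_neg _ (by omega)]
  set G : LaurentSeries K := ((PowerSeries.derivative K g : PowerSeries K) : LaurentSeries K)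
    with hGdef
  have hres : ∀ i : ℤ, i ≤ -1 →
      (((g : LaurentSeries K) ^ i) * G).coeff (-1) = if i = -1 then 1 else 0 := by
    intro i hi
    rw [key i hi, hGdef, mul_assoc, ← PowerSeries.coe_mul]
    have h5 := HahnSeries.coeff_single_mul_add (r := (1:K))
      (x := ((h⁻¹ ^ (-i).toNat * PowerSeries.derivative K g : PowerSeries K) : LaurentSeries K))
      (a := -1 - i) (b := i)
    rw [one_mul, show (-1 - i + i : ℤ) = -1 by ring] at h5
    rw [h5, PowerSeries.coeff_coe, if_neg (by omega : ¬ (-1 - i < 0))]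
    set t : ℕ := (-i).toNat - 1 with htdef
    clear_value t
    have ht : (-i).toNat = t + 1 := by omega
    have hnat : (-1 - i).natAbs = t := by omega
    rw [hnat, ht, hgh, res_aux h hh0 t]
    have hiff : (t = 0) ↔ (i = -1) := by omega
    exact if_congr hiff rfl rfl
  have hFgband : ∀ a : ℤ, a < F.order → Fg.coeff a = 0 := by
    intro a ha
    rw [hFg a, Finset.Icc_eq_empty (not_le.mpr ha), Finset.sum_empty]
  have hGband : ∀ b : ℤ, b < 0 → G.coeff b = 0 := fun b hb => coe_coeff_neg _ hb
  rw [mul_coeff_Icc Fg G F.order hFgband hGband (-1)]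
  have step2 : ∑ a ∈ Finset.Icc F.order (-1:ℤ), Fg.coeff a * G.coeff (-1 - a)
      = ∑ a ∈ Finset.Icc F.order (-1:ℤ),
          (∑ i ∈ Finset.Icc F.order (-1:ℤ),
            F.coeff i * ((g : LaurentSeries K) ^ i).coeff a) * G.coeff (-1 - a) := by
    refine Finset.sum_congr rfl fun a ha => ?_
    rw [Finset.mem_Icc] at ha
    rw [hFg a, Finset.sum_subset (Finset.Icc_subset_Icc_right ha.2)]
    intro i hi hni
    rw [Finset.mem_Icc] at hi
    have hai : a < i := by
      by_contra hc
      exact hni (Finset.mem_Icc.mpr ⟨hi.1, not_lt.mp hc⟩)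
    rw [hord i hi.2 a hai, mul_zero]
  rw [step2]
  have step3 : ∑ a ∈ Finset.Icc F.order (-1:ℤ),
          (∑ i ∈ Finset.Icc F.order (-1:ℤ),
            F.coeff i * ((g : LaurentSeries K) ^ i).coeff a) * G.coeff (-1 - a)
      = ∑ i ∈ Finset.Icc F.order (-1:ℤ), F.coeff i *
          ∑ a ∈ Finset.Icc F.order (-1:ℤ),
            ((g : LaurentSeries K) ^ i).coeff a * G.coeff (-1 - a) := by
    simp_rw [Finset.sum_mul]
    rw [Finset.sum_comm]
    simp_rw [mul_assoc, ← Finset.mul_sum]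
  rw [step3]
  have step4 : ∀ i ∈ Finset.Icc F.order (-1:ℤ),
      F.coeff i * ∑ a ∈ Finset.Icc F.order (-1:ℤ),
            ((g : LaurentSeries K) ^ i).coeff a * G.coeff (-1 - a)
      = F.coeff i * (if i = -1 then 1 else 0) := by
    intro i hi
    rw [Finset.mem_Icc] at hi
    rw [show ∑ a ∈ Finset.Icc F.order (-1:ℤ),
          ((g : LaurentSeries K) ^ i).coeff a * G.coeff (-1 - a)
        = (((g : LaurentSeries K) ^ i) * G).coeff (-1) from
      (mul_coeff_Icc _ G F.order (fun a ha => hord i hi.2 a (by omega)) hGband (-1)).symm,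
      hres i hi.2]
  rw [Finset.sum_congr rfl step4]
  simp_rw [mul_ite, mul_one, mul_zero]
  rw [Finset.sum_ite_eq' (Finset.Icc F.order (-1:ℤ)) (-1:ℤ) F.coeff]
  by_cases hN : F.order ≤ -1
  · rw [if_pos (Finset.mem_Icc.mpr ⟨hN, le_refl _⟩)]
  · rw [if_neg (fun hc => hN (Finset.mem_Icc.mp hc).1),
      HahnSeries.coeff_eq_zero_of_lt_order (by omega)]
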